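/- Work in A = ℤ[ψ1, θ1, λ1, λ2, θ2]. Let B_open = ℤ[ψ1,θ1,λ1,λ2]/I₄ where I₄ = (λ2−ψ1(λ1−ψ1), (λ1+θ1)(24λ1²−48λ2), 20(λ1+θ1)λ1λ2, θ1(λ1+θ1)), and let B_cl = ℤ[ξ,λ1,λ2]/(2ξ, ξ(λ1−ξ)). Let G₁ : A → B_open send θ2 ↦ 0 and each other variable to its like-named class, and let G₂ : A → B_cl send ψ1 ↦ ξ, θ1 ↦ ξ−λ1, λ1 ↦ λ1, λ2 ↦ λ2, θ2 ↦ λ2. Then ker G₁ ∩ ker G₂ equals the ideal I₇ generated by the seven elements λ2−θ2−ψ1(λ1−ψ1), (λ1+θ1)(24λ1²−48λ2), 20(λ1+θ1)λ1λ2, θ1(λ1+θ1), 2ψ1θ2, θ2(θ1+λ1−ψ1), ψ1θ1θ2. -/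

import Mathlib

open MvPolynomial

/-- The ideal `I₄ ⊂ ℤ[ψ1,θ1,λ1,λ2]` generated by `λ2−ψ1(λ1−ψ1)`,
`(λ1+θ1)(24λ1²−48λ2)`, `20(λ1+θ1)λ1λ2` and `θ1(λ1+θ1)`.
Variables: `ψ1 = X 0`, `θ1 = X 1`, `λ1 = X 2`, `λ2 = X 3`. -/
noncomputable def I₄ : Ideal (MvPolynomial (Fin 4) ℤ) :=
  Ideal.span {X 3 - X 0 * (X 2 - X 0),
    (X 2 + X 1) * (24 * X 2 ^ 2 - 48 * X 3),
    20 * (X 2 + X 1) * X 2 * X 3,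
    X 1 * (X 2 + X 1)}

/-- The ideal `(2ξ, ξ(λ1−ξ)) ⊂ ℤ[ξ,λ1,λ2]`.  Variables: `ξ = X 0`, `λ1 = X 1`,
`λ2 = X 2`. -/
noncomputable def Icl : Ideal (MvPolynomial (Fin 3) ℤ) :=
  Ideal.span {2 * X 0, X 0 * (X 1 - X 0)}

/-- `G₁ : A = ℤ[ψ1,θ1,λ1,λ2,θ2] → B_open = ℤ[ψ1,θ1,λ1,λ2]/I₄`, sending `θ2 ↦ 0` and
each other variable to its like-named class.  Source variables: `ψ1 = X 0`,
`θ1 = X 1`, `λ1 = X 2`, `λ2 = X 3`, `θ2 = X 4`. -/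
noncomputable def G₁ : MvPolynomial (Fin 5) ℤ →+* MvPolynomial (Fin 4) ℤ ⧸ I₄ :=
  (Ideal.Quotient.mk I₄).comp
    ((aeval ![X 0, X 1, X 2, X 3, 0] :
        MvPolynomial (Fin 5) ℤ →ₐ[ℤ] MvPolynomial (Fin 4) ℤ) :
      MvPolynomial (Fin 5) ℤ →+* MvPolynomial (Fin 4) ℤ)

/-- `G₂ : A = ℤ[ψ1,θ1,λ1,λ2,θ2] → B_cl = ℤ[ξ,λ1,λ2]/(2ξ, ξ(λ1−ξ))`, sending
`ψ1 ↦ ξ`, `θ1 ↦ ξ−λ1`, `λ1 ↦ λ1`, `λ2 ↦ λ2`, `θ2 ↦ λ2`. -/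
noncomputable def G₂ : MvPolynomial (Fin 5) ℤ →+* MvPolynomial (Fin 3) ℤ ⧸ Icl :=
  (Ideal.Quotient.mk Icl).comp
    ((aeval ![X 0, X 0 - X 1, X 1, X 2, X 2] :
        MvPolynomial (Fin 5) ℤ →ₐ[ℤ] MvPolynomial (Fin 3) ℤ) :
      MvPolynomial (Fin 5) ℤ →+* MvPolynomial (Fin 3) ℤ)

/- ### Auxiliary material for the proof -/

namespace KerInfKer

local notation "R5" => MvPolynomial (Fin 5) ℤ
local notation "R4" => MvPolynomial (Fin 4) ℤ
local notation "R3" => MvPolynomial (Fin 3) ℤ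

/-- The target ideal `I₇`. -/
noncomputable def J7 : Ideal R5 :=
  Ideal.span {X 3 - X 4 - X 0 * (X 2 - X 0),
    (X 2 + X 1) * (24 * X 2 ^ 2 - 48 * X 3),
    20 * (X 2 + X 1) * X 2 * X 3,
    X 1 * (X 2 + X 1),
    2 * X 0 * X 4,
    X 4 * (X 1 + X 2 - X 0),
    X 0 * X 1 * X 4}

/-- Generic substitution lemma: a polynomial is congruent to any substitution of it
modulo the ideal generated by the differences `X i - g i`. -/
lemma sub_aeval_mem {n : ℕ} (g : Fin n → MvPolynomial (Fin n) ℤ) (p : MvPolynomial (Fin n) ℤ) :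
    p - aeval g p ∈ Ideal.span (Set.range fun i => (X i : MvPolynomial (Fin n) ℤ) - g i) := by
  induction p using MvPolynomial.induction_on with
  | C a => simp
  | add p q hp hq =>
      have := Ideal.add_mem _ hp hq
      convert this using 1
      push_cast [map_add]
      ring
  | mul_X p i hp =>
      have h2 : (X i - g i) ∈ Ideal.span (Set.range fun i => (X i : MvPolynomial (Fin n) ℤ) - g i) :=
        Ideal.subset_span ⟨i, rfl⟩
      have := Ideal.add_mem _ (Ideal.mul_mem_left _ (X i) hp) (Ideal.mul_mem_left _ (aeval g p) h2)
      convert this using 1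
      push_cast [map_mul, aeval_X]
      ring

lemma mem_span2 {R : Type*} [CommRing R] {g1 g2 x : R} (c1 c2 : R)
    (h : x = c1*g1 + c2*g2) : x ∈ Ideal.span {g1, g2} := by
  subst h
  exact Ideal.add_mem _ (Ideal.mul_mem_left _ _ (Ideal.subset_span (by simp)))
    (Ideal.mul_mem_left _ _ (Ideal.subset_span (by simp)))

lemma mem_span4 {R : Type*} [CommRing R] {g1 g2 g3 g4 x : R} (c1 c2 c3 c4 : R)
    (h : x = c1*g1 + c2*g2 + c3*g3 + c4*g4) :
    x ∈ Ideal.span {g1, g2, g3, g4} := by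
  subst h
  refine Ideal.add_mem _ (Ideal.add_mem _ (Ideal.add_mem _ ?_ ?_) ?_) ?_ <;>
    exact Ideal.mul_mem_left _ _ (Ideal.subset_span (by simp))

lemma mem_span7 {R : Type*} [CommRing R] {g1 g2 g3 g4 g5 g6 g7 x : R}
    (c1 c2 c3 c4 c5 c6 c7 : R)
    (h : x = c1*g1 + c2*g2 + c3*g3 + c4*g4 + c5*g5 + c6*g6 + c7*g7) :
    x ∈ Ideal.span {g1, g2, g3, g4, g5, g6, g7} := by
  subst h
  refine Ideal.add_mem _ (Ideal.add_mem _ (Ideal.add_mem _ (Ideal.add_mem _ (Ideal.add_mem _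
    (Ideal.add_mem _ ?_ ?_) ?_) ?_) ?_) ?_) ?_ <;>
    exact Ideal.mul_mem_left _ _ (Ideal.subset_span (by simp))

lemma G₁_apply (x : R5) :
    G₁ x = Ideal.Quotient.mk I₄ (aeval ![X 0, X 1, X 2, X 3, 0] x) := rfl

lemma G₂_apply (x : R5) :
    G₂ x = Ideal.Quotient.mk Icl (aeval ![X 0, X 0 - X 1, X 1, X 2, X 2] x) := rfl

lemma J_le_ker₁ : J7 ≤ RingHom.ker G₁ := by
  rw [J7, Ideal.span_le]
  rintro x hx
  simp only [Set.mem_insert_iff, Set.mem_singleton_iff] at hx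
  have key : ∀ y : R5,
      aeval ![X 0, X 1, X 2, X 3, (0 : R4)] y ∈ I₄ → y ∈ RingHom.ker G₁ := by
    intro y hy
    rw [RingHom.mem_ker, G₁_apply, Ideal.Quotient.eq_zero_iff_mem]
    exact hy
  rcases hx with rfl | rfl | rfl | rfl | rfl | rfl | rfl <;> refine key _ ?_ <;> rw [I₄]
  · exact mem_span4 1 0 0 0 (by simp [map_ofNat]; try ring)
  · exact mem_span4 0 1 0 0 (by simp [map_ofNat]; try ring)
  · exact mem_span4 0 0 1 0 (by simp [map_ofNat]; try ring)
  · exact mem_span4 0 0 0 1 (by simp [map_ofNat]; try ring)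
  · exact mem_span4 0 0 0 0 (by simp [map_ofNat]; try ring)
  · exact mem_span4 0 0 0 0 (by simp [map_ofNat]; try ring)
  · exact mem_span4 0 0 0 0 (by simp [map_ofNat]; try ring)

lemma J_le_ker₂ : J7 ≤ RingHom.ker G₂ := by
  rw [J7, Ideal.span_le]
  rintro x hx
  simp only [Set.mem_insert_iff, Set.mem_singleton_iff] at hx
  have key : ∀ y : R5,
      aeval ![X 0, X 0 - X 1, X 1, X 2, (X 2 : R3)] y ∈ Icl → y ∈ RingHom.ker G₂ := by
    intro y hy
    rw [RingHom.mem_ker, G₂_apply, Ideal.Quotient.eq_zero_iff_mem]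
    exact hy
  rcases hx with rfl | rfl | rfl | rfl | rfl | rfl | rfl <;> refine key _ ?_ <;> rw [Icl]
  · exact mem_span2 0 (-1) (by simp [map_ofNat]; try ring)
  · exact mem_span2 (12 * (X 1 ^ 2 - 2 * X 2)) 0 (by simp [map_ofNat]; try ring)
  · exact mem_span2 (10 * X 1 * X 2) 0 (by simp [map_ofNat]; try ring)
  · exact mem_span2 0 (-1) (by simp [map_ofNat]; try ring)
  · exact mem_span2 (X 2) 0 (by simp [map_ofNat]; try ring)
  · exact mem_span2 0 0 (by simp [map_ofNat]; try ring)
  · exact mem_span2 0 (-(X 2)) (by simp [map_ofNat]; try ring)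

/-- Reduction modulo `J7` of the variable `θ2 = X 4`. -/
lemma L1 (p : R5) :
    p - aeval (![X 0, X 1, X 2, X 3, X 3 - X 0 * (X 2 - X 0)] : Fin 5 → R5) p ∈ J7 := by
  refine Ideal.span_le.mpr ?_ (sub_aeval_mem _ p)
  rintro x ⟨i, rfl⟩
  fin_cases i <;> simp <;>
  first
    | exact J7.zero_mem
    | (rw [J7]; exact mem_span7 (-1) 0 0 0 0 0 0 (by ring))

/-- Reduction modulo `J7` of a polynomial multiplied by `θ2 = X 4`. -/
lemma L2 (u : R5) :
    X 4 * u - X 4 * aeval (![X 0, X 0 - X 2, X 2, X 3, X 3] : Fin 5 → R5) u ∈ J7 := by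
  rw [← mul_sub]
  have hs := sub_aeval_mem ![X 0, X 0 - X 2, X 2, X 3, X 3] u
  refine Submodule.span_induction ?_ ?_ ?_ ?_ hs
  · rintro x ⟨i, rfl⟩
    fin_cases i <;> simp
    · rw [J7]
      exact mem_span7 0 0 0 0 0 1 0 (by ring)
    · rw [J7]
      exact mem_span7 (-(X 4)) 0 0 0 0 (-(X 0)) 1 (by ring)
  · simp
  · intro x y _ _ hx hy
    have : X 4 * (x + y) = X 4 * x + X 4 * y := by ring
    rw [this]
    exact Ideal.add_mem _ hx hy
  · intro a x _ hx
    have : X 4 * (a • x) = a * (X 4 * x) := by rw [smul_eq_mul]; ring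
    rw [this]
    exact Ideal.mul_mem_left _ _ hx

lemma L3a (p : R5) :
    aeval (![X 0, X 1, X 2, X 3] : Fin 4 → R5)
      (aeval (![X 0, X 1, X 2, X 3, X 3 - X 0 * (X 2 - X 0)] : Fin 5 → R4) p) =
    aeval (![X 0, X 1, X 2, X 3, X 3 - X 0 * (X 2 - X 0)] : Fin 5 → R5) p := by
  have h : ((aeval (![X 0, X 1, X 2, X 3] : Fin 4 → R5) : R4 →ₐ[ℤ] R5)).comp
      ((aeval (![X 0, X 1, X 2, X 3, X 3 - X 0 * (X 2 - X 0)] : Fin 5 → R4) : R5 →ₐ[ℤ] R4)) =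
      (aeval (![X 0, X 1, X 2, X 3, X 3 - X 0 * (X 2 - X 0)] : Fin 5 → R5) : R5 →ₐ[ℤ] R5) := by
    apply algHom_ext
    intro i
    fin_cases i <;> simp
  exact AlgHom.congr_fun h p

lemma L3b (r : R4) :
    aeval (![X 0, X 1, X 2, X 3, 0] : Fin 5 → R4)
      (aeval (![X 0, X 1, X 2, X 3] : Fin 4 → R5) r) = r := by
  have h : ((aeval (![X 0, X 1, X 2, X 3, 0] : Fin 5 → R4) : R5 →ₐ[ℤ] R4)).comp
      ((aeval (![X 0, X 1, X 2, X 3] : Fin 4 → R5) : R4 →ₐ[ℤ] R5)) = AlgHom.id ℤ R4 := by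
    apply algHom_ext
    intro i
    fin_cases i <;> simp
  exact AlgHom.congr_fun h r

lemma L3c (p : R5) :
    aeval (![X 0, X 2, X 3] : Fin 3 → R5)
      (aeval (![X 0, X 0 - X 1, X 1, X 2, X 2] : Fin 5 → R3)
        (aeval (![X 0, X 0 - X 2, X 2, X 3, X 3] : Fin 5 → R5) p)) =
    aeval (![X 0, X 0 - X 2, X 2, X 3, X 3] : Fin 5 → R5) p := by
  have h : ((aeval (![X 0, X 2, X 3] : Fin 3 → R5) : R3 →ₐ[ℤ] R5)).comp
      (((aeval (![X 0, X 0 - X 1, X 1, X 2, X 2] : Fin 5 → R3) : R5 →ₐ[ℤ] R3)).comp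
        ((aeval (![X 0, X 0 - X 2, X 2, X 3, X 3] : Fin 5 → R5) : R5 →ₐ[ℤ] R5))) =
      (aeval (![X 0, X 0 - X 2, X 2, X 3, X 3] : Fin 5 → R5) : R5 →ₐ[ℤ] R5) := by
    apply algHom_ext
    intro i
    fin_cases i <;> simp
  exact AlgHom.congr_fun h p

lemma two_eq_zero' : (2 : MvPolynomial (Fin 3) (ZMod 2)) = 0 := by
  rw [← map_ofNat (MvPolynomial.C : ZMod 2 →+* MvPolynomial (Fin 3) (ZMod 2)) 2]
  have : (2 : ZMod 2) = 0 := rfl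
  rw [this, map_zero]

/-- Representation lemma: if `X 2 * w ∈ Icl` then `w ∈ Icl`, with an explicit
representation. -/
lemma Icl_rep {w : R3} (h : X 2 * w ∈ Icl) :
    ∃ t r : R3, w = t * (2 * X 0) + r * (X 0 * (X 1 - X 0)) := by
  set E0 : R3 →ₐ[ℤ] R3 := aeval ![0, X 1, X 2] with hE0def
  have hIclE0 : ∀ z ∈ Icl, E0 z = 0 := by
    intro z hz
    have : Icl ≤ RingHom.ker (E0 : R3 →+* R3) := by
      rw [Icl, Ideal.span_le]
      rintro x hx
      simp only [Set.mem_insert_iff, Set.mem_singleton_iff] at hx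
      rcases hx with rfl | rfl <;> simp [RingHom.mem_ker, hE0def]
    exact this hz
  set M2 : R3 →+* MvPolynomial (Fin 3) (ZMod 2) := MvPolynomial.map (Int.castRingHom (ZMod 2)) with hM2def
  set E1 : R3 →ₐ[ℤ] R3 := aeval ![X 0, X 0, X 2] with hE1def
  have hIclE1 : ∀ z ∈ Icl, M2 (E1 z) = 0 := by
    intro z hz
    have : Icl ≤ RingHom.ker (M2.comp (E1 : R3 →+* R3)) := by
      rw [Icl, Ideal.span_le]
      rintro x hx
      simp only [Set.mem_insert_iff, Set.mem_singleton_iff] at hx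
      rcases hx with rfl | rfl <;>
        simp [RingHom.mem_ker, hE1def, hM2def, map_ofNat, two_eq_zero']
    simpa using this hz
  have hE0w : E0 w = 0 := by
    have h0 := hIclE0 _ h
    rw [map_mul] at h0
    have hX2 : E0 (X 2) = X 2 := by simp [hE0def]
    rw [hX2] at h0
    rcases mul_eq_zero.mp h0 with h' | h'
    · exact absurd h' (X_ne_zero _)
    · exact h'
  have hE1w : M2 (E1 w) = 0 := by
    have h0 := hIclE1 _ h
    rw [map_mul, map_mul] at h0
    have hX2 : M2 (E1 (X 2)) = X 2 := by simp [hE0def, hE1def, hM2def]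
    rw [hX2] at h0
    rcases mul_eq_zero.mp h0 with h' | h'
    · exact absurd h' (X_ne_zero _)
    · exact h'
  have hwX0 : w ∈ Ideal.span {(X 0 : R3)} := by
    have hs := sub_aeval_mem ![0, X 1, X 2] w
    rw [show (aeval ![0, X 1, X 2]) w = E0 w from rfl, hE0w, sub_zero] at hs
    refine Ideal.span_le.mpr ?_ hs
    rintro x ⟨i, rfl⟩
    fin_cases i <;> simp <;> exact Ideal.subset_span rfl
  obtain ⟨q, hq⟩ := Ideal.mem_span_singleton'.mp hwX0
  have hE1q : M2 (E1 q) = 0 := by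
    rw [← hq] at hE1w
    rw [map_mul, map_mul] at hE1w
    have hX0 : M2 (E1 (X 0)) = X 0 := by simp [hE1def, hM2def]
    rw [hX0] at hE1w
    rcases mul_eq_zero.mp hE1w with h' | h'
    · exact h'
    · exact absurd h' (X_ne_zero _)
  have h2dvd : ∃ t : R3, E1 q = C 2 * t := by
    have : E1 q ∈ RingHom.ker M2 := hE1q
    rw [hM2def, MvPolynomial.ker_map, ZMod.ker_intCastRingHom, Ideal.map_span,
      Set.image_singleton] at this
    obtain ⟨t, ht⟩ := Ideal.mem_span_singleton'.mp this
    exact ⟨t, by rw [← ht]; push_cast; ring⟩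
  obtain ⟨t, ht⟩ := h2dvd
  have htay : q - E1 q ∈ Ideal.span {(X 1 - X 0 : R3)} := by
    have hs := sub_aeval_mem ![X 0, X 0, X 2] q
    refine Ideal.span_le.mpr ?_ hs
    rintro x ⟨i, rfl⟩
    fin_cases i <;> simp
  obtain ⟨r, hr⟩ := Ideal.mem_span_singleton'.mp htay
  refine ⟨t, r, ?_⟩
  have hC2 : (C 2 : R3) = 2 := map_ofNat (C : ℤ →+* R3) 2
  rw [← hq]
  have hq' : q = E1 q + r * (X 1 - X 0) := by rw [hr]; ring
  rw [hq', ht, hC2]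
  ring

end KerInfKer

open KerInfKer in
/-- `ker G₁ ∩ ker G₂` equals the ideal `I₇` generated by the seven elements
`λ2−θ2−ψ1(λ1−ψ1)`, `(λ1+θ1)(24λ1²−48λ2)`, `20(λ1+θ1)λ1λ2`, `θ1(λ1+θ1)`,
`2ψ1θ2`, `θ2(θ1+λ1−ψ1)`, `ψ1θ1θ2`. -/
theorem ker_inf_ker_eq_I₇ :
    RingHom.ker G₁ ⊓ RingHom.ker G₂ =
      Ideal.span {X 3 - X 4 - X 0 * (X 2 - X 0),
        (X 2 + X 1) * (24 * X 2 ^ 2 - 48 * X 3),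
        20 * (X 2 + X 1) * X 2 * X 3,
        X 1 * (X 2 + X 1),
        2 * X 0 * X 4,
        X 4 * (X 1 + X 2 - X 0),
        X 0 * X 1 * X 4} := by
  rw [show Ideal.span {X 3 - X 4 - X 0 * (X 2 - X 0),
        (X 2 + X 1) * (24 * X 2 ^ 2 - 48 * X 3),
        20 * (X 2 + X 1) * X 2 * X 3,
        X 1 * (X 2 + X 1),
        2 * X 0 * X 4,
        X 4 * (X 1 + X 2 - X 0),
        X 0 * X 1 * X 4} = J7 from rfl]
  refine le_antisymm ?_ (le_inf J_le_ker₁ J_le_ker₂)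
  intro p hp
  obtain ⟨h1, h2⟩ := Submodule.mem_inf.mp hp
  rw [RingHom.mem_ker] at h1 h2
  -- Step 1: reduce modulo the first generator, eliminating θ2
  have hσ : p - aeval (![X 0, X 1, X 2, X 3, X 3 - X 0 * (X 2 - X 0)] :
      Fin 5 → MvPolynomial (Fin 5) ℤ) p ∈ J7 := L1 p
  have hσ1 : G₁ (aeval (![X 0, X 1, X 2, X 3, X 3 - X 0 * (X 2 - X 0)] :
      Fin 5 → MvPolynomial (Fin 5) ℤ) p) = 0 := by
    have hd := RingHom.mem_ker.mp (J_le_ker₁ hσ)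
    rw [map_sub, h1, zero_sub, neg_eq_zero] at hd
    exact hd
  -- Step 2: the reduced polynomial comes from a 4-variable polynomial lying in I₄
  have hqmem : aeval (![X 0, X 1, X 2, X 3, X 3 - X 0 * (X 2 - X 0)] :
      Fin 5 → MvPolynomial (Fin 4) ℤ) p ∈ I₄ := by
    rw [← L3a p] at hσ1
    rw [G₁_apply, L3b] at hσ1
    exact Ideal.Quotient.eq_zero_iff_mem.mp hσ1
  rw [I₄] at hqmem
  rw [Ideal.mem_span_insert] at hqmem
  obtain ⟨c1, z1, hz1, hqe⟩ := hqmem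
  rw [Ideal.mem_span_insert] at hz1
  obtain ⟨c2, z2, hz2, hz1e⟩ := hz1
  rw [Ideal.mem_span_insert] at hz2
  obtain ⟨c3, z3, hz3, hz2e⟩ := hz2
  obtain ⟨c4, hz3e⟩ := Ideal.mem_span_singleton'.mp hz3
  -- Step 3: modulo J7 the element p is congruent to u * X 4
  set u : MvPolynomial (Fin 5) ℤ :=
    aeval (![X 0, X 1, X 2, X 3] : Fin 4 → MvPolynomial (Fin 5) ℤ) c1 with hu
  have hsu : aeval (![X 0, X 1, X 2, X 3, X 3 - X 0 * (X 2 - X 0)] :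
      Fin 5 → MvPolynomial (Fin 5) ℤ) p - u * X 4 ∈ J7 := by
    rw [← L3a p, hqe, hz1e, hz2e, ← hz3e, J7]
    refine mem_span7
      (aeval (![X 0, X 1, X 2, X 3] : Fin 4 → MvPolynomial (Fin 5) ℤ) c1)
      (aeval (![X 0, X 1, X 2, X 3] : Fin 4 → MvPolynomial (Fin 5) ℤ) c2)
      (aeval (![X 0, X 1, X 2, X 3] : Fin 4 → MvPolynomial (Fin 5) ℤ) c3)
      (aeval (![X 0, X 1, X 2, X 3] : Fin 4 → MvPolynomial (Fin 5) ℤ) c4)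
      0 0 0 ?_
    rw [hu]
    simp only [map_add, map_mul, map_sub, map_ofNat, map_pow, aeval_X,
      Matrix.cons_val_zero, Matrix.cons_val_one, Matrix.head_cons,
      Matrix.cons_val_two, Matrix.tail_cons, Matrix.cons_val_three]
    ring
  have hpu : p - u * X 4 ∈ J7 := by
    have := J7.add_mem hσ hsu
    rwa [sub_add_sub_cancel] at this
  -- Step 4: u * X 4 lies in ker G₂, reduce it modulo J7 once more
  have h2u : G₂ (u * X 4) = 0 := by
    have hd := RingHom.mem_ker.mp (J_le_ker₂ hpu)
    rw [map_sub, h2, zero_sub, neg_eq_zero] at hd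
    exact hd
  have hred := L2 u
  have h2v : G₂ (X 4 * aeval (![X 0, X 0 - X 2, X 2, X 3, X 3] :
      Fin 5 → MvPolynomial (Fin 5) ℤ) u) = 0 := by
    have hd := RingHom.mem_ker.mp (J_le_ker₂ hred)
    rw [map_sub, mul_comm (X 4) u, h2u, zero_sub, neg_eq_zero] at hd
    exact hd
  -- Step 5: extract the 3-variable image and apply the representation lemma
  set v : MvPolynomial (Fin 5) ℤ :=
    aeval (![X 0, X 0 - X 2, X 2, X 3, X 3] : Fin 5 → MvPolynomial (Fin 5) ℤ) u with hv
  set w : MvPolynomial (Fin 3) ℤ :=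
    aeval (![X 0, X 0 - X 1, X 1, X 2, X 2] : Fin 5 → MvPolynomial (Fin 3) ℤ) v with hw
  have hmem : (X 2 : MvPolynomial (Fin 3) ℤ) * w ∈ Icl := by
    rw [G₂_apply] at h2v
    rw [map_mul] at h2v
    have hX4 : aeval (![X 0, X 0 - X 1, X 1, X 2, X 2] :
        Fin 5 → MvPolynomial (Fin 3) ℤ) (X 4 : MvPolynomial (Fin 5) ℤ) = X 2 := by simp
    rw [hX4] at h2v
    exact Ideal.Quotient.eq_zero_iff_mem.mp h2v
  obtain ⟨t, r, hwrep⟩ := Icl_rep hmem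
  -- Step 6: pull the representation back to five variables
  have hvw : aeval (![X 0, X 2, X 3] : Fin 3 → MvPolynomial (Fin 5) ℤ) w = v := by
    rw [hw, hv]
    exact L3c u
  have hX4v : X 4 * v ∈ J7 := by
    rw [← hvw, hwrep, J7]
    refine mem_span7 0 0 0 0
      (aeval (![X 0, X 2, X 3] : Fin 3 → MvPolynomial (Fin 5) ℤ) t)
      (aeval (![X 0, X 2, X 3] : Fin 3 → MvPolynomial (Fin 5) ℤ) r * X 0)
      (-(aeval (![X 0, X 2, X 3] : Fin 3 → MvPolynomial (Fin 5) ℤ) r)) ?_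
    simp only [map_add, map_mul, map_sub, map_ofNat, aeval_X,
      Matrix.cons_val_zero, Matrix.cons_val_one, Matrix.head_cons,
      Matrix.cons_val_two, Matrix.tail_cons]
    ring
  -- Step 7: assemble
  have hfin := J7.add_mem (J7.add_mem hpu hred) hX4v
  have hre : p = (p - u * X 4) + (X 4 * u - X 4 * v) + X 4 * v := by
    rw [hv]
    ring
  rwa [← hre] at hfin
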